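/- If a vector x of nonnegative integers with n components majorizes a vector y with n components, then for every k with 1 ≤ k ≤ n, the vector x^(k) (consisting of all C(n,k) sums of k distinct components of x, sorted in nonincreasing order) majorizes the vector y^(k). -/

import Mathlib

/-- The components of a multiset of naturals, sorted in descending order. -/
def descSort (s : Multiset ℕ) : List ℕ := (s.sort (· ≤ ·)).reverse

/-- `s` majorizes `t`: every partial sum of the descending sort of `s` is at least the
corresponding partial sum for `t`, and the total sums are equal. -/
def MajorizesM (s t : Multiset ℕ) : Prop :=
  (∀ j : ℕ, ((descSort t).take j).sum ≤ ((descSort s).take j).sum) ∧ t.sum = s.sum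

/-- The multiset of values of a vector. -/
def toMul {n : ℕ} (x : Fin n → ℕ) : Multiset ℕ := Multiset.ofList (List.ofFn x)

/-- Majorization of vectors. -/
def Majorizes {n : ℕ} (x y : Fin n → ℕ) : Prop := MajorizesM (toMul x) (toMul y)

/-- `x^(k)`: the multiset of all `C(n,k)` sums of `k` distinct components of `x`. -/
def subsetSums {n : ℕ} (x : Fin n → ℕ) (k : ℕ) : Multiset ℕ :=
  (Finset.powersetCard k (Finset.univ : Finset (Fin n))).val.map fun B => ∑ i ∈ B, x i

set_option linter.unnecessarySeqFocus false

def topSum (j : ℕ) (s : Multiset ℕ) : ℕ := ((descSort s).take j).sum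

lemma descSort_sorted (s : Multiset ℕ) : (descSort s).Pairwise (· ≥ ·) := by
  have := Multiset.pairwise_sort s (· ≤ ·)
  rw [descSort, List.pairwise_reverse]
  exact this

lemma descSort_coe (s : Multiset ℕ) : ((descSort s : List ℕ) : Multiset ℕ) = s := by
  rw [descSort, Multiset.coe_reverse, Multiset.sort_eq]

lemma descSort_length (s : Multiset ℕ) : (descSort s).length = Multiset.card s := by
  rw [descSort, List.length_reverse, Multiset.length_sort]

lemma descSort_sum (s : Multiset ℕ) : (descSort s).sum = s.sum := by
  conv_rhs => rw [← descSort_coe s]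
  rfl

lemma descSort_of_sorted {l : List ℕ} (h : l.Pairwise (· ≥ ·)) : descSort (↑l) = l := by
  refine List.Perm.eq_of_pairwise' (descSort_sorted _) h ?_
  rw [← Multiset.coe_eq_coe, descSort_coe]

lemma topSum_mono (s : Multiset ℕ) {j j' : ℕ} (h : j ≤ j') : topSum j s ≤ topSum j' s := by
  unfold topSum
  have h1 : (descSort s).take j = ((descSort s).take j').take j := by
    rw [List.take_take, Nat.min_eq_left h]
  calc ((descSort s).take j).sum ≤ ((descSort s).take j).sum + (((descSort s).take j').drop j).sum := Nat.le_add_right _ _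
    _ = ((descSort s).take j').sum := by rw [h1, List.sum_take_add_sum_drop]

lemma topSum_of_card_le (s : Multiset ℕ) {j : ℕ} (h : Multiset.card s ≤ j) :
    topSum j s = s.sum := by
  rw [topSum, List.take_of_length_le (by rw [descSort_length]; exact h), descSort_sum]
open List in
lemma take_sum_cons_le {a : ℕ} (ls : List ℕ) (ha : ∀ x ∈ ls, x ≤ a) (m : ℕ) :
    (ls.take m).sum ≤ ((a :: ls).take m).sum := by
  cases m with
  | zero => simp
  | succ m =>
    rw [List.take_succ_cons, List.sum_cons]
    by_cases hm : m < ls.length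
    · rw [List.sum_take_succ _ _ hm]
      have := ha _ (List.getElem_mem hm)
      omega
    · rw [List.take_of_length_le (by omega), List.take_of_length_le (by omega)]
      omega

lemma sum_le_sum_take {lu ls : List ℕ} (h : lu.Sublist ls) (hs : ls.Pairwise (· ≥ ·)) :
    lu.sum ≤ (ls.take lu.length).sum := by
  induction h with
  | slnil => simp
  | @cons l₁ l₂ a h ih =>
    have hs' : l₂.Pairwise (· ≥ ·) := hs.tail
    have ha : ∀ x ∈ l₂, x ≤ a := fun x hx => List.rel_of_pairwise_cons hs hx
    exact le_trans (ih hs') (take_sum_cons_le l₂ ha _)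
  | @cons_cons l₁ l₂ a h ih =>
    simp only [List.length_cons, List.take_succ_cons, List.sum_cons]
    exact Nat.add_le_add_left (ih hs.tail) a

lemma sum_le_topSum_of_le {u s : Multiset ℕ} (h : u ≤ s) : u.sum ≤ topSum (Multiset.card u) s := by
  have hsub : (descSort u).Subperm (descSort s) := by
    rw [← Multiset.coe_le, descSort_coe, descSort_coe]; exact h
  have hsl : (descSort u).Sublist (descSort s) :=
    List.sublist_of_subperm_of_pairwise hsub (descSort_sorted u) (descSort_sorted s)
  have := sum_le_sum_take hsl (descSort_sorted s)
  rwa [descSort_length, descSort_sum] at this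

lemma sum_le_topSum_of_le' {u s : Multiset ℕ} (h : u ≤ s) {j : ℕ} (hj : Multiset.card u ≤ j) :
    u.sum ≤ topSum j s :=
  le_trans (sum_le_topSum_of_le h) (topSum_mono s hj)

lemma exists_le_topSum (j : ℕ) (s : Multiset ℕ) :
    ∃ u : Multiset ℕ, u ≤ s ∧ Multiset.card u ≤ j ∧ u.sum = topSum j s := by
  refine ⟨↑((descSort s).take j), ?_, ?_, rfl⟩
  · have h1 : (↑((descSort s).take j) : Multiset ℕ) ≤ ↑(descSort s) :=
      Multiset.coe_le.mpr (List.take_sublist _ _).subperm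
    rwa [descSort_coe] at h1
  · rw [Multiset.coe_card, List.length_take]
    omega

lemma maj_refl (s : Multiset ℕ) : MajorizesM s s := ⟨fun _ => le_refl _, rfl⟩

lemma maj_trans {s t u : Multiset ℕ} (h1 : MajorizesM s t) (h2 : MajorizesM t u) :
    MajorizesM s u :=
  ⟨fun j => le_trans (h2.1 j) (h1.1 j), h2.2.trans h1.2⟩

lemma topSum_le_of_maj {s t : Multiset ℕ} (h : MajorizesM s t) (j : ℕ) :
    topSum j t ≤ topSum j s := h.1 j

lemma topSum_superadd {s1 s2 : Multiset ℕ} (j1 j2 : ℕ) :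
    topSum j1 s1 + topSum j2 s2 ≤ topSum (j1 + j2) (s1 + s2) := by
  obtain ⟨v1, hv1, hc1, he1⟩ := exists_le_topSum j1 s1
  obtain ⟨v2, hv2, hc2, he2⟩ := exists_le_topSum j2 s2
  have : (v1 + v2).sum ≤ topSum (j1 + j2) (s1 + s2) :=
    sum_le_topSum_of_le' (add_le_add hv1 hv2) (by rw [Multiset.card_add]; omega)
  rw [Multiset.sum_add] at this
  omega

lemma exists_split {u a b : Multiset ℕ} (h : u ≤ a + b) :
    ∃ u1 u2, u1 ≤ a ∧ u2 ≤ b ∧ u = u1 + u2 := by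
  refine ⟨u ∩ a, u - u ∩ a, Multiset.inter_le_right, ?_, ?_⟩
  · have h1 : u - u ∩ a = u - a := by
      ext x
      simp only [Multiset.count_sub, Multiset.count_inter]
      omega
    rw [h1, tsub_le_iff_left]
    exact h
  · rw [add_comm]
    exact (tsub_add_cancel_of_le Multiset.inter_le_left).symm

lemma maj_add {s1 s2 t1 t2 : Multiset ℕ} (h1 : MajorizesM s1 t1) (h2 : MajorizesM s2 t2) :
    MajorizesM (s1 + s2) (t1 + t2) := by
  constructor
  · intro j
    show topSum j (t1 + t2) ≤ topSum j (s1 + s2)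
    obtain ⟨u, hu, hcu, heu⟩ := exists_le_topSum j (t1 + t2)
    obtain ⟨u1, u2, hu1, hu2, huu⟩ := exists_split hu
    have hc : Multiset.card u1 + Multiset.card u2 ≤ j := by
      rw [huu, Multiset.card_add] at hcu; exact hcu
    calc topSum j (t1 + t2) = u.sum := heu.symm
      _ = u1.sum + u2.sum := by rw [huu, Multiset.sum_add]
      _ ≤ topSum (Multiset.card u1) t1 + topSum (Multiset.card u2) t2 :=
          Nat.add_le_add (sum_le_topSum_of_le hu1) (sum_le_topSum_of_le hu2)
      _ ≤ topSum (Multiset.card u1) s1 + topSum (Multiset.card u2) s2 :=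
          Nat.add_le_add (h1.1 _) (h2.1 _)
      _ ≤ topSum (Multiset.card u1 + Multiset.card u2) (s1 + s2) := topSum_superadd _ _
      _ ≤ topSum j (s1 + s2) := topSum_mono _ hc
  · rw [Multiset.sum_add, Multiset.sum_add, h1.2, h2.2]

lemma maj_pair {a b : ℕ} (hb : 1 ≤ b) (hba : b ≤ a) :
    MajorizesM {a + 1, b - 1} ({a, b} : Multiset ℕ) := by
  have e1 : ({a + 1, b - 1} : Multiset ℕ) = (↑[a + 1, b - 1] : Multiset ℕ) := rfl
  have e2 : ({a, b} : Multiset ℕ) = (↑[a, b] : Multiset ℕ) := rfl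
  have d1 : descSort ↑[a + 1, b - 1] = [a + 1, b - 1] :=
    descSort_of_sorted (by constructor <;> simp <;> omega)
  have d2 : descSort ↑[a, b] = [a, b] :=
    descSort_of_sorted (by constructor <;> simp <;> omega)
  constructor
  · intro j
    rw [e1, e2, d1, d2]
    match j with
    | 0 => simp
    | 1 => simp
    | (j + 2) =>
      rw [List.take_of_length_le (by simp), List.take_of_length_le (by simp)]
      simp; omega
  · rw [e1, e2]
    simp [Multiset.sum_coe]
    omega

lemma maj_map2 (M : Multiset ℕ) {a b : ℕ} (hb : 1 ≤ b) (hba : b ≤ a) :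
    MajorizesM (M.map (a + 1 + ·) + M.map (b - 1 + ·)) (M.map (a + ·) + M.map (b + ·)) := by
  induction M using Multiset.induction with
  | empty => simpa using maj_refl 0
  | cons c M ih =>
    have e1 : (c ::ₘ M).map (a + 1 + ·) + (c ::ₘ M).map (b - 1 + ·)
        = ({a + c + 1, b + c - 1} : Multiset ℕ) + (M.map (a + 1 + ·) + M.map (b - 1 + ·)) := by
      simp only [Multiset.map_cons, Multiset.insert_eq_cons]
      have h1 : a + 1 + c = a + c + 1 := by omega
      have h2 : b - 1 + c = b + c - 1 := by omega
      rw [h1, h2]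
      rw [Multiset.cons_add, Multiset.cons_add]
      congr 1
      rw [Multiset.add_cons, Multiset.singleton_add]
    have e2 : (c ::ₘ M).map (a + ·) + (c ::ₘ M).map (b + ·)
        = ({a + c, b + c} : Multiset ℕ) + (M.map (a + ·) + M.map (b + ·)) := by
      simp only [Multiset.map_cons, Multiset.insert_eq_cons]
      rw [Multiset.cons_add, Multiset.cons_add]
      congr 1
      rw [Multiset.add_cons, Multiset.singleton_add]
    rw [e1, e2]
    exact maj_add (maj_pair (by omega) (by omega)) ih

def ksums (k : ℕ) (s : Multiset ℕ) : Multiset ℕ := (Multiset.powersetCard k s).map Multiset.sum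

lemma ksums_zero (s : Multiset ℕ) : ksums 0 s = {0} := by
  simp [ksums, Multiset.powersetCard_zero_left]

lemma ksums_cons (j : ℕ) (a : ℕ) (s : Multiset ℕ) :
    ksums (j + 1) (a ::ₘ s) = ksums (j + 1) s + (ksums j s).map (a + ·) := by
  simp [ksums, Multiset.powersetCard_cons, Multiset.map_map, Function.comp_def]

lemma pair_split (p q : ℕ) : ({q, p} : Multiset ℕ) = {q} + {p} := by
  rw [Multiset.insert_eq_cons, ← Multiset.singleton_add]

lemma maj_ksums_transfer (k : ℕ) {a b : ℕ} (hb : 1 ≤ b) (hba : b ≤ a) (u : Multiset ℕ) :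
    MajorizesM (ksums k ((a + 1) ::ₘ (b - 1) ::ₘ u)) (ksums k (a ::ₘ b ::ₘ u)) := by
  match k with
  | 0 => rw [ksums_zero, ksums_zero]; exact maj_refl _
  | 1 =>
    rw [ksums_cons, ksums_cons, ksums_cons, ksums_cons, ksums_zero, ksums_zero, ksums_zero]
    simp only [Multiset.map_singleton, add_zero]
    have e2 : ksums (0 + 1) u + ({b - 1} : Multiset ℕ) + ({a + 1} : Multiset ℕ)
        = ksums (0 + 1) u + ({a + 1, b - 1} : Multiset ℕ) := by
      rw [pair_split]; abel
    have e3 : ksums (0 + 1) u + ({b} : Multiset ℕ) + ({a} : Multiset ℕ)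
        = ksums (0 + 1) u + ({a, b} : Multiset ℕ) := by
      rw [pair_split]; abel
    rw [e2, e3]
    exact maj_add (maj_refl _) (maj_pair hb hba)
  | (i + 2) =>
    rw [ksums_cons, ksums_cons, ksums_cons, ksums_cons, ksums_cons, ksums_cons]
    rw [Multiset.map_add, Multiset.map_add]
    have e0 : (((ksums i u).map ((b : ℕ) - 1 + ·)).map ((a : ℕ) + 1 + ·))
        = (((ksums i u).map ((b : ℕ) + ·)).map ((a : ℕ) + ·)) := by
      rw [Multiset.map_map, Multiset.map_map]
      apply Multiset.map_congr rfl
      intro c _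
      simp only [Function.comp_apply]
      omega
    rw [e0]
    have e4 : ∀ (X p q C : Multiset ℕ), X + p + (q + C) = X + C + (q + p) := by
      intro X p q C; abel
    conv_lhs => rw [e4]
    conv_rhs => rw [e4]
    exact maj_add (maj_refl _) (maj_map2 _ hb hba)

lemma sum_set_add : ∀ (l : List ℕ) (p : ℕ) (hp : p < l.length) (v : ℕ),
    (l.set p v).sum + l[p] = l.sum + v := by
  intro l
  induction l with
  | nil => intro p hp; simp at hp
  | cons x xs ih =>
    intro p hp v
    cases p with
    | zero => simp [List.set]; omega
    | succ q =>
      simp only [List.set, List.sum_cons, List.getElem_cons_succ]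
      have := ih q (by simpa using hp) v
      omega

lemma exists_coe_set : ∀ (l : List ℕ) (q : ℕ) (hq : q < l.length) (v : ℕ),
    ∃ w : Multiset ℕ, (↑l : Multiset ℕ) = l[q] ::ₘ w ∧ (↑(l.set q v) : Multiset ℕ) = v ::ₘ w := by
  intro l
  induction l with
  | nil => intro q hq; simp at hq
  | cons x xs ih =>
    intro q hq v
    cases q with
    | zero =>
      exact ⟨↑xs, by simp [Multiset.cons_coe], by simp [List.set, Multiset.cons_coe]⟩
    | succ q =>
      obtain ⟨w, hw1, hw2⟩ := ih q (by simpa using hq) v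
      refine ⟨x ::ₘ w, ?_, ?_⟩
      · rw [List.getElem_cons_succ, ← Multiset.cons_coe, hw1, Multiset.cons_swap]
      · rw [List.set, ← Multiset.cons_coe, hw2, Multiset.cons_swap]

lemma exists_transfer {ds dt : List ℕ} (hds : ds.Pairwise (· ≥ ·)) (hdt : dt.Pairwise (· ≥ ·))
    (hlen : dt.length = ds.length) (hsum : dt.sum = ds.sum)
    (hdom : ∀ j, (dt.take j).sum ≤ (ds.take j).sum) (hne : dt ≠ ds) :
    ∃ (dt' : List ℕ) (p r : ℕ) (hp : p < dt.length) (hr : r < dt.length),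
      p < r ∧ 1 ≤ dt[r] ∧ dt[r] ≤ dt[p] ∧
      dt' = (dt.set p (dt[p] + 1)).set r (dt[r] - 1) ∧
      dt'.Pairwise (· ≥ ·) ∧
      dt'.sum = dt.sum ∧
      (∀ j, (dt'.take j).sum ≤ (ds.take j).sum) ∧
      (∀ j, (dt.take j).sum ≤ (dt'.take j).sum) ∧
      (dt.take (p + 1)).sum < (dt'.take (p + 1)).sum := by
  set n := dt.length with hn
  have hdsget : ∀ (i j : ℕ) (hi : i < ds.length) (hj : j < ds.length), i < j → ds[j] ≤ ds[i] := by
    intro i j hi hj hij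
    exact List.pairwise_iff_getElem.mp hds i j hi hj hij
  have hdtget : ∀ (i j : ℕ) (hi : i < n) (hj : j < n), i < j → dt[j] ≤ dt[i] := by
    intro i j hi hj hij
    exact List.pairwise_iff_getElem.mp hdt i j hi hj hij
  -- there is a place where strict domination starts
  have hex1 : ∃ j, (dt.take (j + 1)).sum < (ds.take (j + 1)).sum := by
    by_contra hcon
    push_neg at hcon
    apply hne
    have heq : ∀ j, (dt.take j).sum = (ds.take j).sum := by
      intro j
      cases j with
      | zero => simp
      | succ m => exact le_antisymm (hdom (m + 1)) (hcon m)
    apply List.ext_getElem hlen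
    intro i h1 h2
    have e1 := heq (i + 1)
    have e2 := heq i
    rw [List.sum_take_succ _ _ h1, List.sum_take_succ _ _ h2] at e1
    omega
  classical
  set p := Nat.find hex1 with hp_def
  have hp1 : (dt.take (p + 1)).sum < (ds.take (p + 1)).sum := Nat.find_spec hex1
  have hpmin : ∀ j, j ≤ p → (dt.take j).sum = (ds.take j).sum := by
    intro j hj
    cases j with
    | zero => simp
    | succ m =>
      have : ¬ (dt.take (m + 1)).sum < (ds.take (m + 1)).sum :=
        Nat.find_min hex1 (by omega)
      exact le_antisymm (hdom (m + 1)) (by omega)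
  have hpn : p < n := by
    by_contra hcon
    push_neg at hcon
    rw [List.take_of_length_le (by omega), List.take_of_length_le (by omega)] at hp1
    omega
  have hpds : p < ds.length := by omega
  have hdtp_lt : dt[p] < ds[p] := by
    have e2 := hpmin p (le_refl p)
    rw [List.sum_take_succ _ _ hpn, List.sum_take_succ _ _ hpds] at hp1
    omega
  -- the place where equality resumes
  have hex2 : ∃ j, p < j ∧ (dt.take j).sum = (ds.take j).sum := by
    refine ⟨n, by omega, ?_⟩
    rw [List.take_of_length_le (by omega), List.take_of_length_le (by omega), hsum]
  set m := Nat.find hex2 with hm_def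
  have hm1 : p < m ∧ (dt.take m).sum = (ds.take m).sum := Nat.find_spec hex2
  have hmn : m ≤ n := Nat.find_le (by
    refine ⟨by omega, ?_⟩
    rw [List.take_of_length_le (by omega), List.take_of_length_le (by omega), hsum])
  have hstrict : ∀ j, p < j → j < m → (dt.take j).sum < (ds.take j).sum := by
    intro j h1 h2
    have := Nat.find_min hex2 h2
    have := hdom j
    have h3 := Nat.find_min hex2 (m := j) h2
    rcases Nat.lt_or_ge ((dt.take j).sum) ((ds.take j).sum) with h | h
    · exact h
    · exfalso; exact h3 ⟨h1, le_antisymm (hdom j) h⟩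
  have hmp2 : p + 2 ≤ m := by
    by_contra hcon
    push_neg at hcon
    have hmeq : m = p + 1 := by omega
    have h5 := hm1.2
    rw [hmeq] at h5
    omega
  set r := m - 1 with hr_def
  have hrn : r < n := by omega
  have hrds : r < ds.length := by omega
  have hpr : p < r := by omega
  -- dt[r] > ds[r]
  have hdtr_gt : ds[r] < dt[r] := by
    have e1 := hm1.2
    have e2 := hstrict r (by omega) (by omega)
    have hm_eq : m = r + 1 := by omega
    rw [hm_eq, List.sum_take_succ _ _ hrn, List.sum_take_succ _ _ hrds] at e1
    omega
  have hb1 : 1 ≤ dt[r] := by omega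
  have hba : dt[r] ≤ dt[p] := hdtget p r hpn hrn hpr
  -- H1 : earlier entries are strictly bigger than dt[p]
  have H1 : ∀ i (hin : i < n) (hi : i < p), dt[p] < dt[i] := by
    intro i hin hi
    have e1 := hpmin i (by omega)
    have e2 := hpmin (i + 1) (by omega)
    have hi1 : i < n := by omega
    have hi2 : i < ds.length := by omega
    rw [List.sum_take_succ _ _ hi1, List.sum_take_succ _ _ hi2] at e2
    have : dt[i]'(by omega) = ds[i]'(by omega) := by omega
    have := hdsget i p hi2 hpds hi
    omega
  -- H2 : later entries are strictly smaller than dt[r]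
  have H2 : ∀ i (hi2 : i < n) (hi1 : r < i), dt[i] < dt[r] := by
    intro i hi2 hi1
    have hmi : m ≤ i := by omega
    have hmn2 : m < n := by omega
    have hmds : m < ds.length := by omega
    have e1 := hm1.2
    have e2 := hdom (m + 1)
    rw [List.sum_take_succ _ _ hmn2, List.sum_take_succ _ _ hmds] at e2
    have hdtm_le : dt[m] ≤ ds[m] := by omega
    have h3 : dt[i] ≤ dt[m] := by
      rcases Nat.eq_or_lt_of_le hmi with h | h
      · subst h; omega
      · exact hdtget m i hmn2 hi2 h
    have h4 : ds[m] ≤ ds[r] := hdsget r m hrds hmds (by omega)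
    omega
  have key : ∀ j, (((dt.set p (dt[p] + 1)).set r (dt[r] - 1)).take j).sum
      = if j ≤ p then (dt.take j).sum
        else if j ≤ r then (dt.take j).sum + 1 else (dt.take j).sum := by
    intro j
    rw [List.take_set, List.take_set]
    by_cases h1 : j ≤ p
    · rw [if_pos h1, List.set_eq_of_length_le, List.set_eq_of_length_le] <;>
        simp [List.length_take] <;> omega
    · rw [if_neg h1]
      have hpj : p < (dt.take j).length := by
        rw [List.length_take]; omega
      have e1 := sum_set_add (dt.take j) p hpj (dt[p] + 1)
      rw [List.getElem_take] at e1
      by_cases h2 : j ≤ r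
      · rw [if_pos h2, List.set_eq_of_length_le (by simp [List.length_take]; omega)]
        omega
      · rw [if_neg h2]
        have hrj : r < ((dt.take j).set p (dt[p] + 1)).length := by
          rw [List.length_set, List.length_take]; omega
        have e2 := sum_set_add _ r hrj (dt[r] - 1)
        rw [List.getElem_set_ne (by omega), List.getElem_take] at e2
        omega
  refine ⟨(dt.set p (dt[p] + 1)).set r (dt[r] - 1), p, r, hpn, hrn, hpr, hb1, hba, rfl,
    ?_, ?_, ?_, ?_, ?_⟩
  · -- sortedness
    rw [List.pairwise_iff_getElem]
    intro i j hi hj hij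
    simp only [List.length_set] at hi hj
    have hgi : ∀ (q : ℕ) (hq : q < n), ((dt.set p (dt[p] + 1)).set r (dt[r] - 1))[q]'(by
        simpa using hq) = if r = q then dt[r] - 1 else if p = q then dt[p] + 1 else dt[q] := by
      intro q hq
      by_cases h1 : r = q
      · subst h1; rw [if_pos rfl, List.getElem_set_self (by simpa using hq)]
      · rw [List.getElem_set_ne h1, if_neg h1]
        by_cases h2 : p = q
        · subst h2; rw [if_pos rfl, List.getElem_set_self (by simpa using hq)]
        · rw [List.getElem_set_ne h2, if_neg h2]
    rw [hgi i hi, hgi j hj]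
    by_cases h1 : r = i
    · subst h1
      rw [if_pos rfl, if_neg (by omega), if_neg (by omega)]
      have := H2 j hj hij
      omega
    · rw [if_neg h1]
      by_cases h2 : p = i
      · subst h2
        rw [if_pos rfl]
        by_cases h3 : r = j
        · subst h3; rw [if_pos rfl]; omega
        · rw [if_neg h3, if_neg (by omega)]
          have := hdtget _ _ hi hj hij
          omega
      · rw [if_neg h2]
        by_cases h3 : r = j
        · subst h3
          rw [if_pos rfl]
          have := hdtget _ _ hi hj hij
          omega
        · rw [if_neg h3]
          by_cases h4 : p = j
          · subst h4
            rw [if_pos rfl]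
            have := H1 _ hi (by omega)
            omega
          · rw [if_neg h4]
            exact hdtget i j hi hj hij
  · -- sum
    have e1 := sum_set_add dt p hpn (dt[p] + 1)
    have e2 := sum_set_add (dt.set p (dt[p] + 1)) r (by simpa using hrn) (dt[r] - 1)
    rw [List.getElem_set_ne (by omega)] at e2
    omega
  · -- domination by ds
    intro j
    rw [key j]
    by_cases h1 : j ≤ p
    · rw [if_pos h1]; exact hdom j
    · rw [if_neg h1]
      by_cases h2 : j ≤ r
      · rw [if_pos h2]
        have := hstrict j (by omega) (by omega)
        omega
      · rw [if_neg h2]; exact hdom j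
  · -- dt' dominates dt
    intro j
    rw [key j]
    split_ifs <;> omega
  · -- strict at p + 1
    rw [key (p + 1), if_neg (by omega), if_pos (by omega)]
    omega

noncomputable def Ssig (s : Multiset ℕ) : ℕ :=
  ∑ j ∈ Finset.range (Multiset.card s + 1), topSum j s

lemma Ssig_le_of_maj {s t : Multiset ℕ} (hcard : Multiset.card t = Multiset.card s)
    (h : MajorizesM s t) : Ssig t ≤ Ssig s := by
  rw [Ssig, Ssig, hcard]
  exact Finset.sum_le_sum fun j _ => h.1 j

lemma step_lemma {s t : Multiset ℕ} (hcard : Multiset.card t = Multiset.card s)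
    (h : MajorizesM s t) (hne : t ≠ s) :
    ∃ t' : Multiset ℕ, Multiset.card t' = Multiset.card t ∧ MajorizesM s t' ∧
      (∀ k, MajorizesM (ksums k t') (ksums k t)) ∧ Ssig t < Ssig t' := by
  have hne' : descSort t ≠ descSort s := by
    intro hcon
    apply hne
    rw [← descSort_coe t, ← descSort_coe s, hcon]
  obtain ⟨dt', p, r, hp, hr, hpr, hb1, hba, hdt'_def, hsort', hsum', hdom', hge', hstr'⟩ :=
    exists_transfer (descSort_sorted s) (descSort_sorted t)
      (by rw [descSort_length, descSort_length, hcard])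
      (by rw [descSort_sum, descSort_sum, h.2]) h.1 hne'
  have hlen' : dt'.length = (descSort t).length := by rw [hdt'_def]; simp
  refine ⟨(↑dt' : Multiset ℕ), ?_, ?_, ?_, ?_⟩
  · rw [Multiset.coe_card, hlen', descSort_length]
  · constructor
    · intro j
      rw [descSort_of_sorted hsort']
      exact hdom' j
    · rw [Multiset.sum_coe, hsum', descSort_sum, h.2]
  · -- transfer majorization of ksums
    intro k
    obtain ⟨w, hw1, hw2⟩ := exists_coe_set (descSort t) p hp ((descSort t)[p] + 1)
    have hr2 : r < ((descSort t).set p ((descSort t)[p] + 1)).length := by simpa using hr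
    obtain ⟨w2, hw3, hw4⟩ :=
      exists_coe_set ((descSort t).set p ((descSort t)[p] + 1)) r hr2 ((descSort t)[r] - 1)
    rw [List.getElem_set_ne (by omega)] at hw3
    rw [hw2] at hw3
    have hab : (descSort t)[p] + 1 ≠ (descSort t)[r] := by omega
    rcases (Multiset.cons_eq_cons).mp hw3 with ⟨h1, _⟩ | ⟨_, cs, hcs1, hcs2⟩
    · exact absurd h1 hab
    have ht : t = (descSort t)[p] ::ₘ (descSort t)[r] ::ₘ cs := by
      conv_lhs => rw [← descSort_coe t]
      rw [hw1, hcs1]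
    have ht' : (↑dt' : Multiset ℕ) = ((descSort t)[p] + 1) ::ₘ ((descSort t)[r] - 1) ::ₘ cs := by
      rw [hdt'_def, hw4, hcs2, Multiset.cons_swap]
    conv_rhs => rw [ht]
    rw [ht']
    exact maj_ksums_transfer k hb1 hba cs
  · -- measure increases
    rw [Ssig, Ssig, Multiset.coe_card, hlen', descSort_length]
    apply Finset.sum_lt_sum
    · intro j _
      simp only [topSum]
      rw [descSort_of_sorted hsort']
      exact hge' j
    · refine ⟨p + 1, Finset.mem_range.mpr ?_, ?_⟩
      · have hlen2 : (descSort t).length = Multiset.card t := descSort_length t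
        omega
      · simp only [topSum]
        rw [descSort_of_sorted hsort']
        exact hstr'

lemma main_aux (k : ℕ) : ∀ (D : ℕ) (s t : Multiset ℕ), Multiset.card t = Multiset.card s →
    MajorizesM s t → Ssig s - Ssig t ≤ D → MajorizesM (ksums k s) (ksums k t) := by
  intro D
  induction D with
  | zero =>
    intro s t hcard h hD
    by_cases hne : t = s
    · subst hne; exact maj_refl _
    · obtain ⟨t', _, hmaj', _, hlt⟩ := step_lemma hcard h hne
      have h1 := Ssig_le_of_maj hcard h
      have h2 : Multiset.card t' = Multiset.card s := by omega
      have h3 := Ssig_le_of_maj h2 hmaj'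
      omega
  | succ D ih =>
    intro s t hcard h hD
    by_cases hne : t = s
    · subst hne; exact maj_refl _
    · obtain ⟨t', hcard', hmaj', htrans, hlt⟩ := step_lemma hcard h hne
      have h2 : Multiset.card t' = Multiset.card s := by rw [hcard', hcard]
      have h3 := Ssig_le_of_maj h2 hmaj'
      exact maj_trans (ih s t' h2 hmaj' (by omega)) (htrans k)

lemma subsetSums_eq {n : ℕ} (x : Fin n → ℕ) (k : ℕ) : subsetSums x k = ksums k (toMul x) := by
  have h1 : toMul x = Multiset.map x (Finset.univ : Finset (Fin n)).val := by
    have h2 : (Finset.univ : Finset (Fin n)).val = (↑(List.finRange n) : Multiset (Fin n)) := rfl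
    rw [h2, toMul, List.ofFn_eq_map]
    rfl
  rw [h1, ksums, Multiset.powersetCard_map, Multiset.map_map,
    ← Finset.map_val_val_powersetCard, Multiset.map_map]
  rfl

lemma card_toMul {n : ℕ} (x : Fin n → ℕ) : Multiset.card (toMul x) = n := by
  simp [toMul]

/-- If `x` majorizes `y`, then for every `1 ≤ k ≤ n` the vector `x^(k)` of all sums of `k`
distinct components of `x` majorizes `y^(k)`. -/
theorem stmt4 (n k : ℕ) (hk1 : 1 ≤ k) (hk2 : k ≤ n) (x y : Fin n → ℕ)
    (h : Majorizes x y) : MajorizesM (subsetSums x k) (subsetSums y k) := by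
  rw [subsetSums_eq, subsetSums_eq]
  exact main_aux k (Ssig (toMul x)) (toMul x) (toMul y)
    (by rw [card_toMul, card_toMul]) h (by omega)
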